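/- Let Λ ⊆ ℂ be a lattice and let ω, ω' ∈ ℂ be nonzero with ω·Λ ⊆ Λ and ω'·Λ ⊆ Λ. The diagonal Δ ⊆ E × E is pre-periodic for [ω] × [ω'] : E × E → E × E if and only if there exists a positive integer k with ω^k = ω'^k (equivalently, ω/ω' is a root of unity). -/

import Mathlib

open Complex

noncomputable section

/-- The analytic model `E = ℂ/Λ` of an elliptic curve with period lattice `Λ`. -/
abbrev EC (Λ : AddSubgroup ℂ) : Type := ℂ ⧸ Λ

/-- The endomorphism `[ω] : E → E` induced by multiplication by `ω` on `ℂ`,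
for `ω` with `ω·Λ ⊆ Λ`. -/
def mulE (Λ : AddSubgroup ℂ) (ω : ℂ) (hω : ∀ x ∈ Λ, ω * x ∈ Λ) : EC Λ →+ EC Λ :=
  QuotientAddGroup.map Λ Λ (AddMonoidHom.mulLeft ω) (fun x hx => hω x hx)

/-- The relation identifying a point of `E` with its negative. -/
def negRel (Λ : AddSubgroup ℂ) (x y : EC Λ) : Prop := x = y ∨ x = -y

/-- The quotient `E/±` of `E` by the involution `z ↦ -z`. -/
abbrev ECpm (Λ : AddSubgroup ℂ) : Type := Quot (negRel Λ)

/-- The quotient map `q : E → E/±`. -/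
def qpm (Λ : AddSubgroup ℂ) : EC Λ → ECpm Λ := Quot.mk _

/-- The Lattès-type map `φ_ω : E/± → E/±` induced by `[ω]`. -/
def lattes (Λ : AddSubgroup ℂ) (ω : ℂ) (hω : ∀ x ∈ Λ, ω * x ∈ Λ) :
    ECpm Λ → ECpm Λ :=
  Quot.map (mulE Λ ω hω) (by
    intro x y h
    rcases h with h | h
    · exact Or.inl (by rw [h])
    · exact Or.inr (by rw [h, map_neg]))

/-- Iterating `mulE` on a representative multiplies by a power. -/
lemma mulE_iterate (Λ : AddSubgroup ℂ) (ω : ℂ) (hω : ∀ x ∈ Λ, ω * x ∈ Λ)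
    (m : ℕ) (z : ℂ) :
    (⇑(mulE Λ ω hω))^[m] (QuotientAddGroup.mk z) = QuotientAddGroup.mk (ω ^ m * z) := by
  induction m with
  | zero => simp
  | succ m ih =>
    rw [Function.iterate_succ_apply', ih]
    show QuotientAddGroup.map Λ Λ (AddMonoidHom.mulLeft ω) _ (QuotientAddGroup.mk (ω ^ m * z)) = _
    show QuotientAddGroup.mk (ω * (ω ^ m * z)) = _
    congr 1
    ring

lemma pow_mul_mem (Λ : AddSubgroup ℂ) (ω : ℂ) (hω : ∀ x ∈ Λ, ω * x ∈ Λ)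
    (m : ℕ) {x : ℂ} (hx : x ∈ Λ) : ω ^ m * x ∈ Λ := by
  induction m with
  | zero => simpa using hx
  | succ m ih =>
    have := hω _ ih
    rwa [show ω * (ω ^ m * x) = ω ^ (m + 1) * x by ring] at this

lemma lattice_countable (ω₁ ω₂ : ℂ) :
    ((AddSubgroup.closure {ω₁, ω₂} : AddSubgroup ℂ) : Set ℂ).Countable := by
  have : ((AddSubgroup.closure {ω₁, ω₂} : AddSubgroup ℂ) : Set ℂ) ⊆
      Set.range (fun p : ℤ × ℤ => p.1 • ω₁ + p.2 • ω₂) := by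
    intro z hz
    rw [SetLike.mem_coe, AddSubgroup.mem_closure_pair] at hz
    obtain ⟨m, n, h⟩ := hz
    exact ⟨(m, n), h⟩
  exact (Set.countable_range _).mono this

/-- The diagonal `Δ ⊆ E × E` is pre-periodic for `[ω] × [ω']` if and only if `ω^k = ω'^k`
for some positive integer `k` (i.e. `ω/ω'` is a root of unity). -/
theorem diagonal_preperiodic_iff_ratio_root_of_unity
    (ω₁ ω₂ : ℂ) (hind : LinearIndependent ℝ ![ω₁, ω₂])
    (Λ : AddSubgroup ℂ) (hΛ : Λ = AddSubgroup.closure {ω₁, ω₂})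
    (ω ω' : ℂ) (hω0 : ω ≠ 0) (hω'0 : ω' ≠ 0)
    (hω : ∀ x ∈ Λ, ω * x ∈ Λ) (hω' : ∀ x ∈ Λ, ω' * x ∈ Λ) :
    (∃ n k : ℕ, 0 < k ∧
        (Prod.map ⇑(mulE Λ ω hω) ⇑(mulE Λ ω' hω'))^[n + k] '' Set.diagonal (EC Λ) =
        (Prod.map ⇑(mulE Λ ω hω) ⇑(mulE Λ ω' hω'))^[n] '' Set.diagonal (EC Λ)) ↔
    (∃ k : ℕ, 0 < k ∧ ω ^ k = ω' ^ k) := by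
  constructor
  · rintro ⟨n, k, hk, hset⟩
    refine ⟨k, hk, ?_⟩
    -- For every z there is w with both differences in Λ
    have key : ∀ z : ℂ, ∃ w : ℂ,
        ω ^ (n + k) * z - ω ^ n * w ∈ Λ ∧ ω' ^ (n + k) * z - ω' ^ n * w ∈ Λ := by
      intro z
      have hmem : ((QuotientAddGroup.mk (ω ^ (n + k) * z) : EC Λ),
          (QuotientAddGroup.mk (ω' ^ (n + k) * z) : EC Λ)) ∈
          (Prod.map ⇑(mulE Λ ω hω) ⇑(mulE Λ ω' hω'))^[n] '' Set.diagonal (EC Λ) := by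
        rw [← hset]
        refine ⟨((QuotientAddGroup.mk z : EC Λ), (QuotientAddGroup.mk z : EC Λ)), rfl, ?_⟩
        rw [Prod.map_iterate]
        simp [Prod.map, mulE_iterate]
      obtain ⟨⟨a, b⟩, hab, hmap⟩ := hmem
      have hab' : a = b := hab
      subst hab'
      obtain ⟨w, rfl⟩ := QuotientAddGroup.mk_surjective a
      rw [Prod.map_iterate] at hmap
      simp only [Prod.map, mulE_iterate] at hmap
      have h1 := congrArg Prod.fst hmap
      have h2 := congrArg Prod.snd hmap
      simp only at h1 h2
      refine ⟨w, ?_, ?_⟩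
      · have := QuotientAddGroup.eq.mp h1
        rwa [show -(ω ^ n * w) + ω ^ (n + k) * z = ω ^ (n + k) * z - ω ^ n * w by ring] at this
      · have := QuotientAddGroup.eq.mp h2
        rwa [show -(ω' ^ n * w) + ω' ^ (n + k) * z = ω' ^ (n + k) * z - ω' ^ n * w by ring] at this
    set c : ℂ := ω' ^ n * ω ^ (n + k) - ω ^ n * ω' ^ (n + k) with hc
    have hcall : ∀ z : ℂ, c * z ∈ Λ := by
      intro z
      obtain ⟨w, h1, h2⟩ := key z
      have m1 : ω' ^ n * (ω ^ (n + k) * z - ω ^ n * w) ∈ Λ := pow_mul_mem Λ ω' hω' n h1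
      have m2 : ω ^ n * (ω' ^ (n + k) * z - ω' ^ n * w) ∈ Λ := pow_mul_mem Λ ω hω n h2
      have := Λ.sub_mem m1 m2
      rwa [show ω' ^ n * (ω ^ (n + k) * z - ω ^ n * w) -
          ω ^ n * (ω' ^ (n + k) * z - ω' ^ n * w) = c * z by rw [hc]; ring] at this
    have hc0 : c = 0 := by
      by_contra hne
      have hcnt : ((Λ : AddSubgroup ℂ) : Set ℂ).Countable := by
        rw [hΛ]; exact lattice_countable ω₁ ω₂
      have hinj : Function.Injective (fun z : ℂ => c * z) :=
        fun a b h => mul_left_cancel₀ hne h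
      have huniv : (Set.univ : Set ℂ) ⊆ (fun z : ℂ => c * z) ⁻¹' (Λ : Set ℂ) :=
        fun z _ => hcall z
      haveI : Uncountable ℂ := Complex.ofReal_injective.uncountable
      have : (Set.univ : Set ℂ).Countable :=
        ((hcnt.preimage hinj).mono huniv)
      exact Set.not_countable_univ this
    -- from c = 0 deduce ω ^ k = ω' ^ k
    have hnz : ω ^ n * ω' ^ n ≠ 0 := mul_ne_zero (pow_ne_zero _ hω0) (pow_ne_zero _ hω'0)
    have : ω ^ n * ω' ^ n * ω ^ k = ω ^ n * ω' ^ n * ω' ^ k := by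
      have h := sub_eq_zero.mp hc0
      calc ω ^ n * ω' ^ n * ω ^ k = ω' ^ n * ω ^ (n + k) := by rw [pow_add]; ring
        _ = ω ^ n * ω' ^ (n + k) := h
        _ = ω ^ n * ω' ^ n * ω' ^ k := by rw [pow_add]; ring
    exact mul_left_cancel₀ hnz this
  · rintro ⟨k, hk, heq⟩
    refine ⟨0, k, hk, ?_⟩
    rw [zero_add, Function.iterate_zero, Set.image_id]
    ext ⟨x, y⟩
    constructor
    · rintro ⟨⟨a, b⟩, hab, hmap⟩
      have hab' : a = b := hab
      subst hab'
      obtain ⟨z, rfl⟩ := QuotientAddGroup.mk_surjective a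
      rw [Prod.map_iterate] at hmap
      simp only [Prod.map, mulE_iterate] at hmap
      rw [← hmap]
      show QuotientAddGroup.mk (ω ^ k * z) = QuotientAddGroup.mk (ω' ^ k * z)
      rw [heq]
    · intro hxy
      have hxy' : x = y := hxy
      subst hxy'
      obtain ⟨w, rfl⟩ := QuotientAddGroup.mk_surjective x
      refine ⟨((QuotientAddGroup.mk ((ω ^ k)⁻¹ * w) : EC Λ),
        (QuotientAddGroup.mk ((ω ^ k)⁻¹ * w) : EC Λ)), rfl, ?_⟩
      rw [Prod.map_iterate]
      have hk0 : ω ^ k ≠ 0 := pow_ne_zero _ hω0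
      simp only [Prod.map, mulE_iterate]
      rw [← heq]
      rw [show ω ^ k * ((ω ^ k)⁻¹ * w) = w by field_simp]
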